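/- arXiv:2104.01986 — 2 statements merged into one kernel-verified Lean document; each statement's English description precedes it below -/
import Mathlib

section
/- Let μ₁ be a probability measure on ℝ^d, Δ ∈ ℝ^d with Δ ≠ 0, and let R : ℝ^d → ℝ^d be the gradient of a convex function u that is strictly convex on an open set B with μ₁(B) > 0. If X ∼ μ₁ and Y = X + Δ, and all relevant expectations exist, then E[R(X)] ≠ E[R(Y)]. -/
open MeasureTheory

open RealInnerProductSpace in
private lemma stmt4_mono_aux {d : ℕ}
    (Δ : EuclideanSpace ℝ (Fin d)) (hΔ : Δ ≠ 0)
    (u : EuclideanSpace ℝ (Fin d) → ℝ)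
    (R : EuclideanSpace ℝ (Fin d) → EuclideanSpace ℝ (Fin d))
    (hu : ConvexOn ℝ Set.univ u)
    (hgrad : ∀ x, HasGradientAt u (R x) x)
    (B : Set (EuclideanSpace ℝ (Fin d))) (hB : IsOpen B)
    (hstrict : ∀ x ∈ B, ∀ y ∈ B, x ≠ y → ∀ α : ℝ, α ∈ Set.Ioo (0:ℝ) 1 →
      u (α • x + (1 - α) • y) < α * u x + (1 - α) * u y)
    (x : EuclideanSpace ℝ (Fin d)) :
    ⟪R x, Δ⟫ ≤ ⟪R (x + Δ), Δ⟫ ∧ (x ∈ B → ⟪R x, Δ⟫ < ⟪R (x + Δ), Δ⟫) := by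
  set g : ℝ → ℝ := fun t => u (t • Δ + x) with hgdef
  have hL : ∀ t : ℝ, HasDerivAt (fun t : ℝ => t • Δ + x) Δ t := by
    intro t
    simpa using ((hasDerivAt_id t).smul_const Δ).add_const x
  have hg : ∀ t : ℝ, HasDerivAt g (⟪R (t • Δ + x), Δ⟫) t := by
    intro t
    have h1 := (hgrad (t • Δ + x)).hasFDerivAt.comp_hasDerivAt t (hL t)
    simpa [InnerProductSpace.toDual_apply_apply, Function.comp_def] using h1
  have hg0 : HasDerivAt g (⟪R x, Δ⟫) 0 := by simpa using hg 0
  have hg1 : HasDerivAt g (⟪R (x + Δ), Δ⟫) 1 := by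
    have := hg 1
    simpa [add_comm] using this
  -- algebraic identity for convex combinations along the line
  have hcomb : ∀ (a b α β : ℝ), α + β = 1 →
      (α * a + β * b) • Δ + x = α • (a • Δ + x) + β • (b • Δ + x) := by
    intro a b α β hαβ
    have hx : x = α • x + β • x := by rw [← add_smul, hαβ, one_smul]
    conv_lhs => rw [hx]
    simp [add_smul, smul_smul, smul_add]
    abel
  have hgconv : ConvexOn ℝ Set.univ g := by
    refine ⟨convex_univ, ?_⟩
    intro a _ b _ α β hα hβ hαβ
    have h2 := hu.2 (Set.mem_univ (a • Δ + x)) (Set.mem_univ (b • Δ + x)) hα hβ hαβ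
    calc g (α • a + β • b) = u (α • (a • Δ + x) + β • (b • Δ + x)) := by
          rw [hgdef]; simp only [smul_eq_mul]; rw [hcomb a b α β hαβ]
      _ ≤ α * u (a • Δ + x) + β * u (b • Δ + x) := by simpa using h2
      _ = α • g a + β • g b := by simp [hgdef]
  have hle : ⟪R x, Δ⟫ ≤ ⟪R (x + Δ), Δ⟫ := by
    have h1 : ⟪R x, Δ⟫ ≤ slope g 0 1 :=
      hgconv.le_slope_of_hasDerivAt (Set.mem_univ 0) (Set.mem_univ 1) one_pos hg0
    have h2 : slope g 0 1 ≤ ⟪R (x + Δ), Δ⟫ :=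
      hgconv.slope_le_of_hasDerivAt (Set.mem_univ 0) (Set.mem_univ 1) one_pos hg1
    linarith
  refine ⟨hle, fun hxB => ?_⟩
  -- get an interval around 0 mapping into B
  have hopen : IsOpen {t : ℝ | t • Δ + x ∈ B} := by
    have hc : Continuous fun t : ℝ => t • Δ + x := by continuity
    exact hB.preimage hc
  have h0mem : (0 : ℝ) ∈ {t : ℝ | t • Δ + x ∈ B} := by simpa using hxB
  obtain ⟨ε, hε, hball⟩ := Metric.isOpen_iff.mp hopen 0 h0mem
  rw [Real.ball_eq_Ioo, zero_sub, zero_add] at hball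
  have hinj : Function.Injective fun t : ℝ => t • Δ + x := by
    intro a b hab
    simp only [add_left_inj] at hab
    exact smul_left_injective ℝ hΔ hab
  have hsc : StrictConvexOn ℝ (Set.Ioo (-ε) ε) g := by
    refine ⟨convex_Ioo _ _, ?_⟩
    intro a ha b hb hab α β hα hβ hαβ
    have haB : a • Δ + x ∈ B := hball ha
    have hbB : b • Δ + x ∈ B := hball hb
    have hne : a • Δ + x ≠ b • Δ + x := fun h => hab (hinj h)
    have hβeq : β = 1 - α := by linarith
    have hα1 : α < 1 := by linarith
    have hs := hstrict _ haB _ hbB hne α ⟨hα, hα1⟩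
    calc g (α • a + β • b) = u (α • (a • Δ + x) + β • (b • Δ + x)) := by
          rw [hgdef]; simp only [smul_eq_mul]; rw [hcomb a b α β hαβ]
      _ < α * u (a • Δ + x) + β * u (b • Δ + x) := by rw [hβeq]; exact hs
      _ = α • g a + β • g b := by simp [hgdef]
  set t0 : ℝ := min (ε / 2) (1 / 2) with ht0def
  have ht0pos : 0 < t0 := lt_min (by linarith) (by norm_num)
  have ht0ε : t0 < ε := lt_of_le_of_lt (min_le_left _ _) (by linarith)
  have ht0le1 : t0 ≤ 1 := le_trans (min_le_right _ _) (by norm_num)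
  have h0mem' : (0 : ℝ) ∈ Set.Ioo (-ε) ε := by constructor <;> linarith
  have ht0mem : t0 ∈ Set.Ioo (-ε) ε := ⟨by linarith, ht0ε⟩
  have h1 : ⟪R x, Δ⟫ < slope g 0 t0 :=
    hsc.lt_slope_of_hasDerivAt h0mem' ht0mem ht0pos hg0
  have h2 : slope g 0 t0 ≤ slope g 0 1 := by
    have hm := hgconv.slope_mono (Set.mem_univ 0)
    exact hm ⟨Set.mem_univ t0, ht0pos.ne'⟩ ⟨Set.mem_univ 1, one_ne_zero⟩ ht0le1
  have h3 : slope g 0 1 ≤ ⟪R (x + Δ), Δ⟫ :=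
    hgconv.slope_le_of_hasDerivAt (Set.mem_univ 0) (Set.mem_univ 1) one_pos hg1
  linarith

/-- If `R = ∇u` with `u` convex and strictly convex on an open set `B` of positive
`μ₁`-measure, and `Δ ≠ 0`, then `E[R(X)] ≠ E[R(X + Δ)]` for `X ∼ μ₁`. -/
theorem stmt4 {d : ℕ} (μ₁ : Measure (EuclideanSpace ℝ (Fin d))) [IsProbabilityMeasure μ₁]
    (Δ : EuclideanSpace ℝ (Fin d)) (hΔ : Δ ≠ 0)
    (u : EuclideanSpace ℝ (Fin d) → ℝ)
    (R : EuclideanSpace ℝ (Fin d) → EuclideanSpace ℝ (Fin d))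
    (hu : ConvexOn ℝ Set.univ u)
    (hgrad : ∀ x, HasGradientAt u (R x) x)
    (B : Set (EuclideanSpace ℝ (Fin d))) (hB : IsOpen B) (hμB : 0 < μ₁ B)
    (hstrict : ∀ x ∈ B, ∀ y ∈ B, x ≠ y → ∀ α : ℝ, α ∈ Set.Ioo (0:ℝ) 1 →
      u (α • x + (1 - α) • y) < α * u x + (1 - α) * u y)
    (hint : Integrable R μ₁)
    (hint' : Integrable (fun x => R (x + Δ)) μ₁) :
    ∫ x, R x ∂μ₁ ≠ ∫ x, R (x + Δ) ∂μ₁ := by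
  intro heq
  have key := fun x => stmt4_mono_aux Δ hΔ u R hu hgrad B hB hstrict x
  set f : EuclideanSpace ℝ (Fin d) → ℝ :=
    fun x => (inner ℝ Δ (R (x + Δ)) : ℝ) - (inner ℝ Δ (R x) : ℝ) with hfdef
  have hfint : Integrable f μ₁ := by
    have h1 : Integrable (fun x => (inner ℝ Δ (R (x + Δ)) : ℝ)) μ₁ := hint'.const_inner Δ
    have h2 : Integrable (fun x => (inner ℝ Δ (R x) : ℝ)) μ₁ := hint.const_inner Δ
    exact h1.sub h2
  have hfnonneg : ∀ x, 0 ≤ f x := by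
    intro x
    simp only [hfdef]
    rw [sub_nonneg, real_inner_comm (R (x + Δ)) Δ, real_inner_comm (R x) Δ]
    exact (key x).1
  have hfzero : ∫ x, f x ∂μ₁ = 0 := by
    rw [hfdef]
    rw [integral_sub (hint'.const_inner Δ) (hint.const_inner Δ)]
    rw [integral_inner hint' Δ, integral_inner hint Δ, heq, sub_self]
  have hae : f =ᵐ[μ₁] 0 :=
    (integral_eq_zero_iff_of_nonneg hfnonneg hfint).mp hfzero
  have hBsub : B ⊆ {x | ¬ f x = 0} := by
    intro x hxB
    have h := (key x).2 hxB
    simp only [Set.mem_setOf_eq, hfdef]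
    rw [real_inner_comm (R (x + Δ)) Δ, real_inner_comm (R x) Δ]
    intro hzero
    linarith [sub_eq_zero.mp hzero]
  have hnull : μ₁ {x | ¬ f x = 0} = 0 := by
    have : ∀ᵐ x ∂μ₁, f x = 0 := hae
    exact ae_iff.mp this
  exact absurd (measure_mono_null hBsub hnull) hμB.ne'
end

section
/- Among probability density functions f on ℝ with mean θ and variance σ² (0 < σ² < ∞), the quantity σ (∫ f(x)² dx)² is bounded below by 9/125, with equality attained by the Epanechnikov-type density f(x) = (3/(20√5 σ³))(5σ² − (x−θ)²) 𝟙{|x−θ| ≤ √5 σ} — up to rescaling. Consequently 12 σ² (∫ f²)² ≥ 108/125. -/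
open MeasureTheory

lemma epan_sq_integral (θ s : ℝ) (hs : 0 < s) :
    ∫ x : ℝ, (max (s^2 - (x - θ)^2) 0)^2 = 16/15 * s^5 := by
  have hfun : (fun x : ℝ => (max (s^2 - (x - θ)^2) 0)^2) =
      Set.indicator (Set.Icc (θ - s) (θ + s)) (fun x => (s^2 - (x - θ)^2)^2) := by
    funext x
    by_cases hx : x ∈ Set.Icc (θ - s) (θ + s)
    · rw [Set.indicator_of_mem hx]
      have : 0 ≤ s^2 - (x - θ)^2 := by
        obtain ⟨h1, h2⟩ := hx; nlinarith
      rw [max_eq_left this]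
    · rw [Set.indicator_of_notMem hx]
      have : s^2 - (x - θ)^2 < 0 := by
        simp only [Set.mem_Icc, not_and_or, not_le] at hx
        rcases hx with h | h <;> nlinarith
      rw [max_eq_right this.le]; ring
  rw [hfun, MeasureTheory.integral_indicator measurableSet_Icc,
    MeasureTheory.integral_Icc_eq_integral_Ioc,
    ← intervalIntegral.integral_of_le (by linarith)]
  have hsub := intervalIntegral.integral_comp_sub_right (a := θ - s) (b := θ + s)
    (fun u => (s^2 - u^2)^2) θ
  rw [hsub]
  have h1 : ∀ u : ℝ, (s^2 - u^2)^2 = s^4 - 2*s^2*u^2 + u^4 := by intro u; ring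
  simp only [h1]
  have e1 : θ - s - θ = -s := by ring
  have e2 : θ + s - θ = s := by ring
  rw [e1, e2]
  rw [intervalIntegral.integral_add (by apply Continuous.intervalIntegrable; continuity)
      (by apply Continuous.intervalIntegrable; continuity),
    intervalIntegral.integral_sub (by apply Continuous.intervalIntegrable; continuity)
      (by apply Continuous.intervalIntegrable; continuity),
    intervalIntegral.integral_const, intervalIntegral.integral_const_mul]
  rw [integral_pow, integral_pow]
  simp only [smul_eq_mul]
  ring

lemma epan_cont (θ s : ℝ) : Continuous (fun x : ℝ => max (s^2 - (x - θ)^2) 0) := by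
  continuity

lemma epan_sq_integrable (θ s : ℝ) (hs : 0 < s) :
    Integrable (fun x : ℝ => (max (s^2 - (x - θ)^2) 0)^2) := by
  apply Continuous.integrable_of_hasCompactSupport
  · exact (epan_cont θ s).pow 2
  · apply HasCompactSupport.intro (isCompact_Icc (a := θ - s) (b := θ + s))
    intro x hx
    have : s^2 - (x - θ)^2 < 0 := by
      simp only [Set.mem_Icc, not_and_or, not_le] at hx
      rcases hx with h | h <;> nlinarith
    simp [max_eq_right this.le]

set_option maxHeartbeats 1000000 in
/-- Hodges–Lehmann (1956): among densities `f` on ℝ with mean `θ` and variance `σ²`,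
`σ²(∫f²)² ≥ 9/125` (equivalently `12σ²(∫f²)² ≥ 108/125`), with equality attained by the
Epanechnikov-type density `f₀(x) = (3/(20√5σ³))(5σ² − (x−θ)²)𝟙{|x−θ| ≤ √5 σ}`. -/
theorem stmt13 (θ σ : ℝ) (hσ : 0 < σ) (f : ℝ → ℝ)
    (hf0 : ∀ x, 0 ≤ f x) (hfm : Measurable f)
    (hfInt : Integrable f) (hf1 : ∫ x, f x = 1)
    (hmInt : Integrable (fun x => x * f x)) (hmean : ∫ x, x * f x = θ)
    (hvInt : Integrable (fun x => (x - θ)^2 * f x)) (hvar : ∫ x, (x - θ)^2 * f x = σ^2)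
    (hf2 : Integrable (fun x => (f x)^2)) :
    9/125 ≤ σ^2 * (∫ x, (f x)^2)^2 ∧
    108/125 ≤ 12 * σ^2 * (∫ x, (f x)^2)^2 ∧
    ∀ f₀ : ℝ → ℝ,
      (∀ x, f₀ x = if |x - θ| ≤ Real.sqrt 5 * σ
        then 3 / (20 * Real.sqrt 5 * σ^3) * (5 * σ^2 - (x - θ)^2) else 0) →
      σ^2 * (∫ x, (f₀ x)^2)^2 = 9/125 := by
  set r : ℝ := Real.sqrt 5 with hrdef
  have hr0 : 0 < r := Real.sqrt_pos.mpr (by norm_num)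
  have hr2 : r^2 = 5 := Real.sq_sqrt (by norm_num)
  have hrne : r ≠ 0 := ne_of_gt hr0
  have hσne : σ ≠ 0 := ne_of_gt hσ
  set s : ℝ := r * σ with hsdef
  have hs0 : 0 < s := mul_pos hr0 hσ
  have hs2 : s^2 = 5 * σ^2 := by rw [hsdef]; linear_combination σ^2 * hr2
  have hs5 : s^5 = 25 * r * σ^5 := by
    rw [hsdef]; linear_combination (r^3 * σ^5 + 5 * r * σ^5) * hr2
  set g : ℝ → ℝ := fun x => max (s^2 - (x - θ)^2) 0 with hgdef
  have hgcont : Continuous g := epan_cont θ s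
  have hg0 : ∀ x, 0 ≤ g x := fun x => le_max_right _ _
  have hgle : ∀ x, g x ≤ s^2 := by
    intro x
    apply max_le (by nlinarith [sq_nonneg (x - θ)]) (by positivity)
  have hA : ∫ x, (g x)^2 = 16/15 * s^5 := epan_sq_integral θ s hs0
  have hAint : Integrable (fun x => (g x)^2) := epan_sq_integrable θ s hs0
  -- integrability of f * g
  have hfg : Integrable (fun x => f x * g x) := by
    apply Integrable.mono' (hfInt.const_mul (s^2))
    · exact (hfm.mul hgcont.measurable).aestronglyMeasurable
    · filter_upwards with x
      rw [Real.norm_eq_abs, abs_of_nonneg (mul_nonneg (hf0 x) (hg0 x))]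
      calc f x * g x ≤ f x * s^2 := mul_le_mul_of_nonneg_left (hgle x) (hf0 x)
        _ = s^2 * f x := by ring
  -- lower bound on ∫ f g
  have hpInt : Integrable (fun x => f x * (s^2 - (x - θ)^2)) := by
    have : (fun x => f x * (s^2 - (x - θ)^2)) =
        fun x => s^2 * f x - (x - θ)^2 * f x := by funext x; ring
    rw [this]
    exact (hfInt.const_mul _).sub hvInt
  have hlow : 4 * σ^2 ≤ ∫ x, f x * g x := by
    have h1 : ∫ x, f x * (s^2 - (x - θ)^2) = 4 * σ^2 := by
      have e : (fun x => f x * (s^2 - (x - θ)^2)) =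
          fun x => s^2 * f x - (x - θ)^2 * f x := by funext x; ring
      rw [e, integral_sub (hfInt.const_mul _) hvInt, integral_const_mul, hf1, hvar, hs2]
      ring
    rw [← h1]
    apply integral_mono hpInt hfg
    intro x
    exact mul_le_mul_of_nonneg_left (le_max_left _ _) (hf0 x)
  -- AM-GM step
  set lam : ℝ := 20 * r * σ^3 / 3 with hlamdef
  have hlam0 : 0 < lam := by positivity
  have hkey : 3 * r / (25 * σ) ≤ ∫ x, (f x)^2 := by
    have hpt : ∀ x, 2/lam * (f x * g x) - 1/lam^2 * (g x)^2 ≤ (f x)^2 := by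
      intro x
      have hl2 : 0 < lam^2 := by positivity
      have key : 2/lam * (f x * g x) - 1/lam^2 * (g x)^2 =
          (2 * lam * (f x * g x) - (g x)^2) / lam^2 := by
        field_simp
      rw [key, div_le_iff₀ hl2]
      nlinarith [sq_nonneg (lam * f x - g x)]
    have hmono : ∫ x, (2/lam * (f x * g x) - 1/lam^2 * (g x)^2) ≤ ∫ x, (f x)^2 :=
      integral_mono ((hfg.const_mul _).sub (hAint.const_mul _)) hf2 hpt
    rw [integral_sub (hfg.const_mul _) (hAint.const_mul _),
      integral_const_mul, integral_const_mul, hA] at hmono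
    have h2 : 2/lam * (4 * σ^2) - 1/lam^2 * (16/15 * s^5) ≤
        (2/lam * ∫ x, f x * g x) - 1/lam^2 * (16/15 * s^5) :=
      sub_le_sub_right (mul_le_mul_of_nonneg_left hlow (by positivity)) _
    have hr4 : r^4 = 25 := by linear_combination (r^2 + 5) * hr2
    have h3 : 2/lam * (4 * σ^2) - 1/lam^2 * (16/15 * s^5) = 3 * r / (25 * σ) := by
      rw [hs5, hlamdef]
      field_simp
      ring_nf
      linear_combination (-6000) * hr2
    rw [← h3]
    exact le_trans h2 hmono
  have hI0 : (0:ℝ) ≤ ∫ x, (f x)^2 :=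
    le_trans (by positivity) hkey
  have hmain : 9/125 ≤ σ^2 * (∫ x, (f x)^2)^2 := by
    have h1 : 3 * r / 25 ≤ σ * ∫ x, (f x)^2 := by
      rw [show (3 * r / (25 * σ)) = (3 * r / 25) / σ by ring, div_le_iff₀ hσ] at hkey
      linarith
    have h2 : (3 * r / 25)^2 ≤ (σ * ∫ x, (f x)^2)^2 :=
      pow_le_pow_left₀ (by positivity) h1 2
    have h3 : (3 * r / 25)^2 = 9/125 := by linear_combination (9/625) * hr2
    have h4 : (σ * ∫ x, (f x)^2)^2 = σ^2 * (∫ x, (f x)^2)^2 := by ring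
    linarith
  refine ⟨hmain, by linarith, ?_⟩
  -- equality case
  intro f₀ hf₀
  have hc : (fun x => (f₀ x)^2) =
      fun x => (3 / (20 * r * σ^3))^2 * (g x)^2 := by
    funext x
    have hgx : g x = max (s^2 - (x - θ)^2) 0 := rfl
    rw [hf₀ x]
    by_cases hx : |x - θ| ≤ r * σ
    · rw [if_pos hx]
      have habs : (x - θ)^2 ≤ s^2 := by
        rw [← sq_abs, hsdef]
        exact pow_le_pow_left₀ (abs_nonneg _) hx 2
      rw [hgx, max_eq_left (by linarith), hs2]
      ring
    · rw [if_neg hx]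
      push_neg at hx
      have habs : s^2 < (x - θ)^2 := by
        rw [← sq_abs (x - θ), hsdef]
        exact pow_lt_pow_left₀ hx hs0.le (by norm_num)
      rw [hgx, max_eq_right (by linarith)]
      ring
  rw [hc, integral_const_mul, hA, hs5]
  have e1 : (3 / (20 * r * σ^3))^2 * (16/15 * (25 * r * σ^5)) = 3 * r / (25 * σ) := by
    field_simp
    ring_nf
    linear_combination (-6000) * hr2
  rw [e1]
  field_simp
  linear_combination 1125 * hr2
end
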